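/- The set 𝒟 = {(ν, 0)ᵀ : ν ∈ ℤ, 0 ≤ ν ≤ |b| − 1} is a complete residue system of ℤ²[A]/Aℤ²[A]; that is, every x ∈ ℤ²[A] satisfies x − d ∈ Aℤ²[A] for exactly one element d ∈ 𝒟. -/

import Mathlib

open Matrix Polynomial

noncomputable section

private lemma sum_mulVec' {s : Finset ℕ} (M : ℕ → Matrix (Fin 2) (Fin 2) ℚ) (v : Fin 2 → ℚ) :
    (∑ j ∈ s, M j).mulVec v = ∑ j ∈ s, (M j).mulVec v := by
  classical
  induction s using Finset.induction with
  | empty => simp [Matrix.zero_mulVec]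
  | insert _ _ h ih => simp [Finset.sum_insert h, Matrix.add_mulVec, ih]

private lemma algC_mulVec (n : ℤ) (v : Fin 2 → ℚ) :
    (algebraMap ℤ (Matrix (Fin 2) (Fin 2) ℚ) n).mulVec v = (n : ℚ) • v := by
  rw [IsScalarTower.algebraMap_apply ℤ ℚ (Matrix (Fin 2) (Fin 2) ℚ),
    Algebra.algebraMap_eq_smul_one, Matrix.smul_mulVec, Matrix.one_mulVec]
  norm_num

/-- `ℤⁿ[A]`: the set of all vectors of the form `v₀ + A v₁ + ⋯ + A^k v_k`
with integer vectors `v_j`; the smallest `A`-invariant `ℤ`-module containing `ℤⁿ`. -/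
def intSpan {n : ℕ} (A : Matrix (Fin n) (Fin n) ℚ) : Set (Fin n → ℚ) :=
  {x | ∃ (k : ℕ) (v : ℕ → Fin n → ℤ),
    x = ∑ j ∈ Finset.range (k + 1), (A ^ j).mulVec (fun i => ((v j i : ℚ)))}

/-- The digit vector `(ν, 0)ᵀ`. -/
def digitVec (ν : ℤ) : Fin 2 → ℚ := ![(ν : ℚ), 0]

private lemma mem_intSpan_iff (A : Matrix (Fin 2) (Fin 2) ℚ)
    (hA1 : A.mulVec ![1, 0] = ![0, 1]) (x : Fin 2 → ℚ) :
    x ∈ intSpan A ↔ ∃ f : ℤ[X], x = (aeval A f).mulVec ![1, 0] := by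
  constructor
  · rintro ⟨k, v, rfl⟩
    refine ⟨∑ j ∈ Finset.range (k + 1), X ^ j * (C (v j 0) + C (v j 1) * X), ?_⟩
    rw [map_sum, sum_mulVec']
    refine Finset.sum_congr rfl fun j _ => ?_
    have h1 : (fun i => ((v j i : ℚ))) = (v j 0 : ℚ) • ![1, 0] + (v j 1 : ℚ) • ![0, 1] := by
      funext i; fin_cases i <;> simp
    rw [h1, _root_.map_mul, map_pow, aeval_X, ← Matrix.mulVec_mulVec]
    congr 1
    rw [_root_.map_add, _root_.map_mul, aeval_X, aeval_C, aeval_C, Matrix.add_mulVec, algC_mulVec,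
      ← Matrix.mulVec_mulVec, hA1]
    congr 1
    rw [algC_mulVec]
  · rintro ⟨f, rfl⟩
    refine ⟨f.natDegree, fun j => ![f.coeff j, 0], ?_⟩
    rw [aeval_eq_sum_range, sum_mulVec']
    refine Finset.sum_congr rfl fun j _ => ?_
    have h2 : (fun i => ((![f.coeff j, 0] : Fin 2 → ℤ) i : ℚ)) = (f.coeff j : ℚ) • ![1, 0] := by
      funext i; fin_cases i <;> simp
    rw [h2, Matrix.mulVec_smul, ← Int.cast_smul_eq_zsmul ℚ, Matrix.smul_mulVec]

private lemma kill (α β : ℚ) (A : Matrix (Fin 2) (Fin 2) ℚ)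
    (hA1 : A.mulVec ![1, 0] = ![0, 1])
    (hpA : aeval A (X ^ 2 + C α * X + C β : ℚ[X]) = 0)
    (c a b : ℤ) (hc : (c : ℚ) ≠ 0)
    (hq_map : (C c * X ^ 2 + C a * X + C b : ℤ[X]).map (Int.castRingHom ℚ)
      = C (c : ℚ) * (X ^ 2 + C α * X + C β))
    (hq_prim : (C c * X ^ 2 + C a * X + C b : ℤ[X]).IsPrimitive)
    (g : ℤ[X]) (h : (aeval A g).mulVec ![1, 0] = 0) :
    b ∣ g.coeff 0 := by
  set p : ℚ[X] := X ^ 2 + C α * X + C β with hp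
  set q : ℤ[X] := C c * X ^ 2 + C a * X + C b with hq
  have hmonic : p.Monic := by rw [hp]; monicity!
  set gq : ℚ[X] := g.map (Int.castRingHom ℚ) with hgq
  have hdegp : p.degree = 2 := by rw [hp]; compute_degree!
  have haq : aeval A g = aeval A gq := by
    rw [hgq, ← algebraMap_int_eq, aeval_map_algebraMap]
  have hmod : (aeval A (gq %ₘ p)).mulVec ![1, 0] = 0 := by
    have h1 : aeval A (gq %ₘ p) = aeval A gq := by
      conv_rhs => rw [← modByMonic_add_div gq p]
      rw [_root_.map_add, _root_.map_mul, hpA, zero_mul, add_zero]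
    rw [h1, ← haq, h]
  have hdeg : (gq %ₘ p).degree ≤ 1 := by
    have := degree_modByMonic_lt gq hmonic
    rw [hdegp] at this
    exact Order.le_of_lt_succ (by exact_mod_cast this)
  have hr : gq %ₘ p = C ((gq %ₘ p).coeff 1) * X + C ((gq %ₘ p).coeff 0) :=
    eq_X_add_C_of_degree_le_one hdeg
  rw [hr] at hmod
  rw [_root_.map_add, _root_.map_mul, aeval_X, aeval_C, aeval_C, Matrix.add_mulVec,
    ← Matrix.mulVec_mulVec] at hmod
  have hsc : ∀ r : ℚ, (algebraMap ℚ (Matrix (Fin 2) (Fin 2) ℚ) r).mulVec = fun v => r • v := by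
    intro r; funext v
    rw [Algebra.algebraMap_eq_smul_one, Matrix.smul_mulVec, Matrix.one_mulVec]
  rw [hsc, hsc] at hmod
  simp only [hA1] at hmod
  have h0 : (gq %ₘ p).coeff 0 = 0 := by
    have := congrFun hmod 0; simpa using this
  have h1 : (gq %ₘ p).coeff 1 = 0 := by
    have := congrFun hmod 1; simpa using this
  have hrem0 : gq %ₘ p = 0 := by rw [hr, h0, h1]; simp
  have hpdvd : p ∣ gq := (modByMonic_eq_zero_iff_dvd hmonic).mp hrem0
  have hCc : (C (c : ℚ)) * (C (c : ℚ)⁻¹) = 1 := by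
    rw [← C_mul, mul_inv_cancel₀ hc, C_1]
  have hqdvd : q.map (Int.castRingHom ℚ) ∣ gq := by
    obtain ⟨t, ht⟩ := hpdvd
    exact ⟨C (c : ℚ)⁻¹ * t, by rw [hq_map, ht]; linear_combination (-(p * t)) * hCc⟩
  by_cases hg0 : g = 0
  · simp [hg0]
  have hcont : ((g.content : ℚ)) ≠ 0 := by
    simp [Polynomial.content_eq_zero_iff, hg0]
  have hgfact : gq = C ((g.content : ℚ)) * (g.primPart.map (Int.castRingHom ℚ)) := by
    rw [hgq]
    conv_lhs => rw [g.eq_C_content_mul_primPart]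
    rw [Polynomial.map_mul, Polynomial.map_C]
    simp
  have hqdvd2 : q.map (Int.castRingHom ℚ) ∣ g.primPart.map (Int.castRingHom ℚ) := by
    obtain ⟨t, ht⟩ := hqdvd
    refine ⟨C ((g.content : ℚ))⁻¹ * t, ?_⟩
    have hCc2 : (C ((g.content : ℚ))) * (C ((g.content : ℚ))⁻¹) = 1 := by
      rw [← C_mul, mul_inv_cancel₀ hcont, C_1]
    have := ht
    rw [hgfact] at this
    calc g.primPart.map (Int.castRingHom ℚ)
        = C ((g.content : ℚ))⁻¹ * (C ((g.content : ℚ)) * g.primPart.map (Int.castRingHom ℚ)) := by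
          linear_combination (-(g.primPart.map (Int.castRingHom ℚ))) * hCc2
      _ = q.map (Int.castRingHom ℚ) * (C ((g.content : ℚ))⁻¹ * t) := by rw [this]; ring
  have hqg : q ∣ g := by
    have := (IsPrimitive.Int.dvd_iff_map_cast_dvd_map_cast q g.primPart hq_prim).mpr hqdvd2
    exact this.trans g.primPart_dvd
  obtain ⟨s, hs⟩ := hqg
  refine ⟨s.coeff 0, ?_⟩
  have : g.coeff 0 = (q * s).coeff 0 := by rw [← hs]
  rw [this, Polynomial.mul_coeff_zero]
  have : q.coeff 0 = b := by rw [hq]; simp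
  rw [this]
/-- `𝒟 = {(ν,0)ᵀ : 0 ≤ ν ≤ |b| - 1}` is a complete residue system
of `ℤ²[A]/Aℤ²[A]`. -/
theorem stmt0 (α β : ℚ)
    (hirr : Irreducible (X ^ 2 + C α * X + C β : ℚ[X]))
    (c a b : ℤ) (hc : 0 < c)
    (ha : (a : ℚ) = (c : ℚ) * α) (hb : (b : ℚ) = (c : ℚ) * β)
    (hprim : Int.gcd c (Int.gcd a b) = 1)
    (A : Matrix (Fin 2) (Fin 2) ℚ) (hA : A = !![0, -β; 1, -α]) :
    ∀ x ∈ intSpan A, ∃! d : Fin 2 → ℚ,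
      (∃ ν : ℤ, 0 ≤ ν ∧ ν ≤ |b| - 1 ∧ d = digitVec ν) ∧
      ∃ y ∈ intSpan A, x - d = A.mulVec y := by
  have hA1 : A.mulVec ![1, 0] = ![0, 1] := by
    funext i; fin_cases i <;> simp [hA, Matrix.mulVec, dotProduct, Fin.sum_univ_succ]
  have hpA : aeval A (X ^ 2 + C α * X + C β : ℚ[X]) = 0 := by
    simp only [map_add, _root_.map_mul, map_pow, aeval_X, aeval_C,
      Algebra.algebraMap_eq_smul_one]
    ext i j
    fin_cases i <;> fin_cases j <;>
      simp [hA, pow_two, Matrix.mul_apply, Fin.sum_univ_succ] <;> ring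
  have hβ : β ≠ 0 := by
    intro h0
    have hfact : (X ^ 2 + C α * X + C β : ℚ[X]) = X * (X + C α) := by
      rw [h0]; ring_nf; simp
    rcases hirr.2 hfact with h | h
    · exact Polynomial.not_isUnit_X h
    · have := Polynomial.degree_eq_zero_of_isUnit h
      rw [Polynomial.degree_X_add_C] at this
      norm_num at this
  have hcQ : (c : ℚ) ≠ 0 := by positivity
  have hb0 : b ≠ 0 := by
    intro h0
    rw [h0] at hb
    exact hβ (by push_cast at hb; exact (mul_eq_zero.mp hb.symm).resolve_left hcQ)
  have hq_map : (C c * X ^ 2 + C a * X + C b : ℤ[X]).map (Int.castRingHom ℚ)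
      = C (c : ℚ) * (X ^ 2 + C α * X + C β) := by
    simp only [Polynomial.map_add, Polynomial.map_mul, Polynomial.map_pow,
      Polynomial.map_C, Polynomial.map_X, Int.coe_castRingHom]
    rw [show ((a : ℤ) : ℚ) = (c : ℚ) * α from ha, show ((b : ℤ) : ℚ) = (c : ℚ) * β from hb]
    rw [C_mul, C_mul]
    ring
  have hq_prim : (C c * X ^ 2 + C a * X + C b : ℤ[X]).IsPrimitive := by
    intro r hr
    rw [C_dvd_iff_dvd_coeff] at hr
    have h2 := hr 2; have h1 := hr 1; have h0 := hr 0
    simp only [coeff_add, coeff_C_mul, coeff_X_pow, coeff_C, coeff_X] at h2 h1 h0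
    norm_num at h2 h1 h0
    have : r ∣ ((Int.gcd c (Int.gcd a b) : ℤ)) :=
      Int.dvd_coe_gcd h2 (Int.dvd_coe_gcd h1 h0)
    rw [hprim] at this
    exact isUnit_of_dvd_one (by exact_mod_cast this)
  have hqA : aeval A (C c * X ^ 2 + C a * X + C b : ℤ[X]) = 0 := by
    rw [← aeval_map_algebraMap ℚ, algebraMap_int_eq, hq_map, _root_.map_mul, hpA, mul_zero]
  intro x hx
  obtain ⟨f, hf⟩ := (mem_intSpan_iff A hA1 x).mp hx
  set B := |b| with hB
  have hBpos : 0 < B := abs_pos.mpr hb0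
  set m := f.coeff 0 with hm
  set ν := m % B with hν
  have hν0 : 0 ≤ ν := Int.emod_nonneg m (ne_of_gt hBpos)
  have hν1 : ν < B := Int.emod_lt_of_pos m hBpos
  have hdvd : b ∣ m - ν := by
    rw [← abs_dvd, ← hB]
    exact ⟨m / B, by rw [hν, Int.emod_def]; ring⟩
  obtain ⟨t, ht⟩ := hdvd
  set gp : ℤ[X] := f.divX + C t * (-(C c * X + C a)) with hgp
  have hpoly : X * gp = f - C ν - C t * (C c * X ^ 2 + C a * X + C b) := by
    have h1 : X * f.divX + C m = f := X_mul_divX_add f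
    have h2 : (C m : ℤ[X]) = C ν + C b * C t := by
      rw [← C_mul, ← C_add]; congr 1; omega
    rw [hgp]; linear_combination h1 - h2
  set y := (aeval A gp).mulVec ![1, 0] with hy
  have hymem : y ∈ intSpan A := (mem_intSpan_iff A hA1 y).mpr ⟨gp, rfl⟩
  have hd : digitVec ν = (ν : ℚ) • ![1, 0] := by
    funext i; fin_cases i <;> simp [digitVec]
  have hstep : x - digitVec ν = A.mulVec y := by
    rw [hy, Matrix.mulVec_mulVec,
      show A * aeval A gp = aeval A (X * gp) by rw [_root_.map_mul, aeval_X],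
      hpoly, map_sub, map_sub, _root_.map_mul, hqA, mul_zero, sub_zero,
      Matrix.sub_mulVec, aeval_C, algC_mulVec, ← hf, hd]
  refine ⟨digitVec ν, ⟨⟨ν, hν0, by omega, rfl⟩, ⟨y, hymem, hstep⟩⟩, ?_⟩
  rintro d' ⟨⟨ν', hν'0, hν'1, rfl⟩, y', hy'mem, hstep'⟩
  obtain ⟨f1, hf1⟩ := (mem_intSpan_iff A hA1 y').mp hy'mem
  set w : ℤ[X] := gp - f1 with hw
  have hd' : digitVec ν' = (ν' : ℚ) • ![1, 0] := by
    funext i; fin_cases i <;> simp [digitVec]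
  have hz : (aeval A (X * w - C (ν' - ν))).mulVec ![1, 0] = 0 := by
    rw [map_sub, _root_.map_mul, aeval_X, aeval_C, Matrix.sub_mulVec, algC_mulVec,
      ← Matrix.mulVec_mulVec, hw, map_sub, Matrix.sub_mulVec, ← hy, ← hf1,
      Matrix.mulVec_sub, ← hstep, ← hstep', hd, hd']
    funext i; fin_cases i <;> simp <;> push_cast <;> ring
  have hbdvd : b ∣ ν' - ν := by
    have := kill α β A hA1 hpA c a b hcQ hq_map hq_prim _ hz
    have hc0 : (X * w - C (ν' - ν)).coeff 0 = -(ν' - ν) := by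
      simp [Polynomial.mul_coeff_zero]
    rw [hc0] at this
    exact (dvd_neg.mp this)
  have hνeq : ν' = ν := by
    by_contra hne
    have h1 : B ∣ |ν' - ν| := by
      rw [hB]; exact (abs_dvd_abs _ _).mpr hbdvd
    have h2 : B ≤ |ν' - ν| := Int.le_of_dvd (abs_pos.mpr (by omega)) h1
    have h3 : |ν' - ν| < B := abs_lt.mpr ⟨by omega, by omega⟩
    omega
  rw [hνeq]
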